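/- Strong necessitation for S4_h: if ⋀_{i=1}^{k} □_{m_i} A_i ⊢_{S4_h} A and m_i ≤ n for all i (and n > r(A)), then ⋀_{i=1}^{k} □_{m_i} A_i ⊢_{S4_h} □n A. -/

import Mathlib

/-- Poly-modal formulas with modalities `□n` for `n : ℕ`. -/
inductive Fm : Type
  | atom : ℕ → Fm
  | bot  : Fm
  | and  : Fm → Fm → Fm
  | or   : Fm → Fm → Fm
  | imp  : Fm → Fm → Fm
  | neg  : Fm → Fm
  | box  : ℕ → Fm → Fm
  deriving DecidableEq

def Fm.top : Fm := Fm.neg Fm.bot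

/-- `i` occurs as a modality index in the formula. -/
def occursBox (i : ℕ) : Fm → Prop
  | .atom _ => False
  | .bot => False
  | .and A B => occursBox i A ∨ occursBox i B
  | .or A B => occursBox i A ∨ occursBox i B
  | .imp A B => occursBox i A ∨ occursBox i B
  | .neg A => occursBox i A
  | .box n A => i = n ∨ occursBox i A

/-- `n` is strictly greater than every modality index occurring in `A`
    (the paper's "`n > r(A)`"). -/
def BoxLt (A : Fm) (n : ℕ) : Prop := ∀ i, occursBox i A → i < n

/-- The language `L∞`: each box index strictly exceeds all box indices in its scope. -/
inductive Linf : Fm → Prop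
  | atom (k : ℕ) : Linf (.atom k)
  | bot : Linf .bot
  | and {A B : Fm} : Linf A → Linf B → Linf (.and A B)
  | or {A B : Fm} : Linf A → Linf B → Linf (.or A B)
  | imp {A B : Fm} : Linf A → Linf B → Linf (.imp A B)
  | neg {A : Fm} : Linf A → Linf (.neg A)
  | box {A : Fm} (n : ℕ) : Linf A → BoxLt A n → Linf (.box n A)

/-- Boolean evaluation treating atoms and boxed formulas as propositional atoms. -/
def evalWith (v : Fm → Bool) : Fm → Bool
  | .atom k => v (.atom k)
  | .bot => false
  | .and A B => evalWith v A && evalWith v B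
  | .or A B => evalWith v A || evalWith v B
  | .imp A B => !(evalWith v A) || evalWith v B
  | .neg A => !(evalWith v A)
  | .box n A => v (.box n A)

/-- Classical propositional tautologies (on `L∞`-formulas as atoms). -/
def Taut (A : Fm) : Prop := ∀ v, evalWith v A = true

def axH (F : Fm) : Prop := ∃ A n, Linf (Fm.box n A) ∧ F = (Fm.box n A).imp (Fm.box (n+1) A)
def axK (F : Fm) : Prop := ∃ A B n, Linf (Fm.box n (A.imp B)) ∧
    F = (Fm.box n (A.imp B)).imp ((Fm.box n A).imp (Fm.box n B))
def axFour (F : Fm) : Prop := ∃ A n, Linf (Fm.box n A) ∧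
    F = (Fm.box n A).imp (Fm.box (n+1) (Fm.box n A))
def axD (F : Fm) : Prop := ∃ n, F = Fm.neg (Fm.box n Fm.bot)
def axT (F : Fm) : Prop := ∃ A n, Linf (Fm.box n A) ∧ F = (Fm.box n A).imp A
def axL (F : Fm) : Prop := ∃ A n, Linf (Fm.box n A) ∧
    F = (Fm.box (n+1) ((Fm.box n A).imp A)).imp (Fm.box n A)
def axFive (F : Fm) : Prop := ∃ A n, Linf (Fm.box n A) ∧
    F = ((Fm.box n A).neg).imp (Fm.box (n+1) ((Fm.box n A).neg))

/-- Hilbert-style provability over `L∞` from a set of axiom (schema instances):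
    classical tautologies, modus ponens, and necessitation restricted to `n > r(A)`. -/
inductive Prv (Ax : Fm → Prop) : Fm → Prop
  | ax {A : Fm} : Ax A → Prv Ax A
  | taut {A : Fm} : Linf A → Taut A → Prv Ax A
  | mp {A B : Fm} : Prv Ax (A.imp B) → Prv Ax A → Prv Ax B
  | nec {A : Fm} (n : ℕ) : Prv Ax A → BoxLt A n → Prv Ax (Fm.box n A)

def K4hAx (F : Fm) : Prop := axH F ∨ axK F ∨ axFour F
def KD4hAx (F : Fm) : Prop := K4hAx F ∨ axD F
def S4hAx (F : Fm) : Prop := K4hAx F ∨ axT F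
def GLhAx (F : Fm) : Prop := K4hAx F ∨ axL F
def KD45hAx (F : Fm) : Prop := KD4hAx F ∨ axFive F

def K4h : Fm → Prop := Prv K4hAx
def KD4h : Fm → Prop := Prv KD4hAx
def S4h : Fm → Prop := Prv S4hAx
def GLh : Fm → Prop := Prv GLhAx

def conjList (l : List Fm) : Fm := l.foldr Fm.and Fm.top
def disjList (l : List Fm) : Fm := l.foldr Fm.or Fm.bot

/-- `Γ ⊢_L A` : some finite conjunction of members of `Γ` implies `A` in `L`. -/
def Deriv (Ax : Fm → Prop) (Γ : Set Fm) (A : Fm) : Prop :=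
  ∃ l : List Fm, (∀ B ∈ l, B ∈ Γ) ∧ Prv Ax ((conjList l).imp A)

section StrongNec

/-- Erase all boxes of index `≥ n`. -/
def tau (n : ℕ) : Fm → Fm
  | .atom k => .atom k
  | .bot => .bot
  | .and A B => .and (tau n A) (tau n B)
  | .or A B => .or (tau n A) (tau n B)
  | .imp A B => .imp (tau n A) (tau n B)
  | .neg A => .neg (tau n A)
  | .box m A => if n ≤ m then tau n A else .box m (tau n A)

lemma occurs_tau {i n : ℕ} : ∀ {B : Fm}, occursBox i (tau n B) → i < n ∧ occursBox i B := by
  intro B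
  induction B with
  | atom k => simp [tau, occursBox]
  | bot => simp [tau, occursBox]
  | and A B ihA ihB =>
      intro h
      rcases h with h | h
      · exact ⟨(ihA h).1, Or.inl (ihA h).2⟩
      · exact ⟨(ihB h).1, Or.inr (ihB h).2⟩
  | or A B ihA ihB =>
      intro h
      rcases h with h | h
      · exact ⟨(ihA h).1, Or.inl (ihA h).2⟩
      · exact ⟨(ihB h).1, Or.inr (ihB h).2⟩
  | imp A B ihA ihB =>
      intro h
      rcases h with h | h
      · exact ⟨(ihA h).1, Or.inl (ihA h).2⟩
      · exact ⟨(ihB h).1, Or.inr (ihB h).2⟩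
  | neg A ihA =>
      intro h
      exact ⟨(ihA h).1, (ihA h).2⟩
  | box m A ihA =>
      intro h
      by_cases hnm : n ≤ m
      · rw [tau, if_pos hnm] at h
        exact ⟨(ihA h).1, Or.inr (ihA h).2⟩
      · rw [tau, if_neg hnm] at h
        rcases h with rfl | h
        · exact ⟨Nat.lt_of_not_le hnm, Or.inl rfl⟩
        · exact ⟨(ihA h).1, Or.inr (ihA h).2⟩

lemma boxLt_tau {n : ℕ} (B : Fm) : BoxLt (tau n B) n :=
  fun _ h => (occurs_tau h).1

lemma tau_fix {n : ℕ} : ∀ {B : Fm}, BoxLt B n → tau n B = B := by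
  intro B
  induction B with
  | atom k => intro _; rfl
  | bot => intro _; rfl
  | and A B ihA ihB =>
      intro h
      have hA := ihA (fun i hi => h i (Or.inl hi))
      have hB := ihB (fun i hi => h i (Or.inr hi))
      simp [tau, hA, hB]
  | or A B ihA ihB =>
      intro h
      have hA := ihA (fun i hi => h i (Or.inl hi))
      have hB := ihB (fun i hi => h i (Or.inr hi))
      simp [tau, hA, hB]
  | imp A B ihA ihB =>
      intro h
      have hA := ihA (fun i hi => h i (Or.inl hi))
      have hB := ihB (fun i hi => h i (Or.inr hi))
      simp [tau, hA, hB]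
  | neg A ihA =>
      intro h
      simp [tau, ihA (fun i hi => h i hi)]
  | box m A ihA =>
      intro h
      have hm : m < n := h m (Or.inl rfl)
      have hA := ihA (fun i hi => h i (Or.inr hi))
      simp [tau, Nat.not_le.mpr hm, hA]

lemma linf_tau {n : ℕ} : ∀ {B : Fm}, Linf B → Linf (tau n B) := by
  intro B hB
  induction hB with
  | atom k => exact Linf.atom k
  | bot => exact Linf.bot
  | and _ _ ihA ihB => exact Linf.and ihA ihB
  | or _ _ ihA ihB => exact Linf.or ihA ihB
  | imp _ _ ihA ihB => exact Linf.imp ihA ihB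
  | neg _ ih => exact Linf.neg ih
  | box m hA hlt ih =>
      by_cases hnm : n ≤ m
      · rw [tau, if_pos hnm]; exact ih
      · rw [tau, if_neg hnm]
        exact Linf.box m ih (fun i hi => hlt i (occurs_tau hi).2)

lemma eval_tau {n : ℕ} (v : Fm → Bool) :
    ∀ B : Fm, evalWith v (tau n B) = evalWith (fun X => evalWith v (tau n X)) B := by
  intro B
  induction B with
  | atom k => rfl
  | bot => rfl
  | and A B ihA ihB => simp [tau, evalWith, ihA, ihB]
  | or A B ihA ihB => simp [tau, evalWith, ihA, ihB]
  | imp A B ihA ihB => simp [tau, evalWith, ihA, ihB]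
  | neg A ihA => simp [tau, evalWith, ihA]
  | box m A ihA => rfl

lemma taut_tau {n : ℕ} {B : Fm} (h : Taut B) : Taut (tau n B) := by
  intro v
  rw [eval_tau]
  exact h _

lemma linf_box_elim {m : ℕ} {B : Fm} (h : Linf (Fm.box m B)) : Linf B ∧ BoxLt B m := by
  cases h with | box _ h1 h2 => exact ⟨h1, h2⟩

lemma linf_imp_elim {A B : Fm} (h : Linf (A.imp B)) : Linf A ∧ Linf B := by
  cases h with | imp h1 h2 => exact ⟨h1, h2⟩

lemma taut_id (X : Fm) : Taut (X.imp X) := by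
  intro v; simp [evalWith]

lemma prv_id {Ax : Fm → Prop} {X : Fm} (hX : Linf X) : Prv Ax (X.imp X) :=
  Prv.taut (Linf.imp hX hX) (taut_id X)

lemma boxLt_tau_of {n k : ℕ} {B : Fm} (h : BoxLt B k) : BoxLt (tau n B) k :=
  fun i hi => h i (occurs_tau hi).2

theorem prv_tau {n : ℕ} {D : Fm} (h : Prv S4hAx D) : Prv S4hAx (tau n D) := by
  induction h with
  | taut hL hT => exact Prv.taut (linf_tau hL) (taut_tau hT)
  | mp h1 h2 ih1 ih2 => exact Prv.mp ih1 ih2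
  | nec k hB hlt ih =>
      by_cases hnk : n ≤ k
      · rw [tau, if_pos hnk]; exact ih
      · rw [tau, if_neg hnk]
        exact Prv.nec k ih (fun i hi => hlt i (occurs_tau hi).2)
  | ax hax =>
      rcases hax with ((⟨B, k, hlinf, rfl⟩ | ⟨B, C, k, hlinf, rfl⟩ | ⟨B, k, hlinf, rfl⟩) | ⟨B, k, hlinf, rfl⟩)
      · -- axH
        obtain ⟨hB, hBk⟩ := linf_box_elim hlinf
        by_cases h1 : n ≤ k
        · have e : tau n ((Fm.box k B).imp (Fm.box (k+1) B)) = (tau n B).imp (tau n B) := by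
            simp [tau, h1, Nat.le_succ_of_le h1]
          rw [e]; exact prv_id (linf_tau hB)
        · by_cases h2 : n ≤ k + 1
          · have e : tau n ((Fm.box k B).imp (Fm.box (k+1) B)) =
                (Fm.box k (tau n B)).imp (tau n B) := by
              simp [tau, h1, h2]
            rw [e]
            exact Prv.ax (Or.inr ⟨tau n B, k,
              Linf.box k (linf_tau hB) (boxLt_tau_of hBk), rfl⟩)
          · have e : tau n ((Fm.box k B).imp (Fm.box (k+1) B)) =
                (Fm.box k (tau n B)).imp (Fm.box (k+1) (tau n B)) := by
              simp [tau, h1, h2]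
            rw [e]
            exact Prv.ax (Or.inl (Or.inl ⟨tau n B, k,
              Linf.box k (linf_tau hB) (boxLt_tau_of hBk), rfl⟩))
      · -- axK
        obtain ⟨hBC, hltk⟩ := linf_box_elim hlinf
        obtain ⟨hB, hC⟩ := linf_imp_elim hBC
        by_cases h1 : n ≤ k
        · have e : tau n ((Fm.box k (B.imp C)).imp ((Fm.box k B).imp (Fm.box k C))) =
              ((tau n B).imp (tau n C)).imp ((tau n B).imp (tau n C)) := by
            simp [tau, h1]
          rw [e]; exact prv_id (Linf.imp (linf_tau hB) (linf_tau hC))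
        · have e : tau n ((Fm.box k (B.imp C)).imp ((Fm.box k B).imp (Fm.box k C))) =
              (Fm.box k ((tau n B).imp (tau n C))).imp
                ((Fm.box k (tau n B)).imp (Fm.box k (tau n C))) := by
            simp [tau, h1]
          rw [e]
          exact Prv.ax (Or.inl (Or.inr (Or.inl ⟨tau n B, tau n C, k,
            Linf.box k (Linf.imp (linf_tau hB) (linf_tau hC))
              (boxLt_tau_of (B := B.imp C) hltk), rfl⟩)))
      · -- axFour
        obtain ⟨hB, hBk⟩ := linf_box_elim hlinf
        by_cases h1 : n ≤ k
        · have e : tau n ((Fm.box k B).imp (Fm.box (k+1) (Fm.box k B))) =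
              (tau n B).imp (tau n B) := by
            simp [tau, h1, Nat.le_succ_of_le h1]
          rw [e]; exact prv_id (linf_tau hB)
        · by_cases h2 : n ≤ k + 1
          · have e : tau n ((Fm.box k B).imp (Fm.box (k+1) (Fm.box k B))) =
                (Fm.box k (tau n B)).imp (Fm.box k (tau n B)) := by
              simp [tau, h1, h2]
            rw [e]
            exact prv_id (Linf.box k (linf_tau hB) (boxLt_tau_of hBk))
          · have e : tau n ((Fm.box k B).imp (Fm.box (k+1) (Fm.box k B))) =
                (Fm.box k (tau n B)).imp (Fm.box (k+1) (Fm.box k (tau n B))) := by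
              simp [tau, h1, h2]
            rw [e]
            exact Prv.ax (Or.inl (Or.inr (Or.inr ⟨tau n B, k,
              Linf.box k (linf_tau hB) (boxLt_tau_of hBk), rfl⟩)))
      · -- axT
        obtain ⟨hB, hBk⟩ := linf_box_elim hlinf
        by_cases h1 : n ≤ k
        · have e : tau n ((Fm.box k B).imp B) = (tau n B).imp (tau n B) := by
            simp [tau, h1]
          rw [e]; exact prv_id (linf_tau hB)
        · have e : tau n ((Fm.box k B).imp B) = (Fm.box k (tau n B)).imp (tau n B) := by
            simp [tau, h1]
          rw [e]
          exact Prv.ax (Or.inr ⟨tau n B, k,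
            Linf.box k (linf_tau hB) (boxLt_tau_of hBk), rfl⟩)

lemma imp_trans {Ax : Fm → Prop} {X Y Z : Fm} (hX : Linf X) (hY : Linf Y) (hZ : Linf Z)
    (h1 : Prv Ax (X.imp Y)) (h2 : Prv Ax (Y.imp Z)) : Prv Ax (X.imp Z) := by
  have t : Taut ((X.imp Y).imp ((Y.imp Z).imp (X.imp Z))) := by
    intro v; simp only [evalWith]
    cases evalWith v X <;> cases evalWith v Y <;> cases evalWith v Z <;> rfl
  have lt : Linf ((X.imp Y).imp ((Y.imp Z).imp (X.imp Z))) :=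
    Linf.imp (Linf.imp hX hY) (Linf.imp (Linf.imp hY hZ) (Linf.imp hX hZ))
  exact Prv.mp (Prv.mp (Prv.taut lt t) h1) h2

lemma prv_imp_weak {Ax : Fm → Prop} {X B : Fm} (hX : Linf X) (hB : Linf B)
    (h : Prv Ax B) : Prv Ax (X.imp B) := by
  have t : Taut (B.imp (X.imp B)) := by
    intro v; simp only [evalWith]
    cases evalWith v X <;> cases evalWith v B <;> rfl
  exact Prv.mp (Prv.taut (Linf.imp hB (Linf.imp hX hB)) t) h

lemma boxLt_box {m k : ℕ} {B : Fm} (h : m < k) (hB : BoxLt B m) : BoxLt (Fm.box m B) k := by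
  intro i hi
  rcases hi with rfl | hi
  · exact h
  · exact lt_trans (hB i hi) h

lemma lift {m : ℕ} {B : Fm} (hB : Linf (Fm.box m B)) :
    ∀ k, m < k → Prv S4hAx ((Fm.box m B).imp (Fm.box k (Fm.box m B))) := by
  obtain ⟨hB', hBm⟩ := linf_box_elim hB
  intro k
  induction k with
  | zero => intro h; exact absurd h (Nat.not_lt_zero m)
  | succ k ih =>
      intro hk
      rcases Nat.lt_or_ge m k with hmk | hmk
      · have hlk : Linf (Fm.box k (Fm.box m B)) := Linf.box k hB (boxLt_box hmk hBm)
        have hH : Prv S4hAx ((Fm.box k (Fm.box m B)).imp (Fm.box (k+1) (Fm.box m B))) :=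
          Prv.ax (Or.inl (Or.inl ⟨Fm.box m B, k, hlk, rfl⟩))
        exact imp_trans hB hlk
          (Linf.box (k+1) hB (boxLt_box hk hBm)) (ih hmk) hH
      · have hmk' : m = k := le_antisymm (Nat.lt_succ_iff.mp hk) hmk
        subst hmk'
        exact Prv.ax (Or.inl (Or.inr (Or.inr ⟨B, m, hB, rfl⟩)))

lemma single {m n : ℕ} {B : Fm} (hmn : m ≤ n) (hB : Linf (Fm.box m B)) :
    Prv S4hAx ((Fm.box m B).imp (Fm.box n (tau n (Fm.box m B)))) := by
  obtain ⟨hB', hBm⟩ := linf_box_elim hB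
  rcases eq_or_lt_of_le hmn with rfl | hlt
  · have e : tau m (Fm.box m B) = B := by
      rw [tau, if_pos le_rfl]; exact tau_fix hBm
    rw [e]; exact prv_id hB
  · have e : tau n (Fm.box m B) = Fm.box m B := tau_fix (boxLt_box hlt hBm)
    rw [e]; exact lift hB n hlt

lemma prv_and_mp {Ax : Fm → Prop} {X Y W Z : Fm} (hX : Linf X) (hY : Linf Y)
    (hW : Linf W) (hZ : Linf Z)
    (h1 : Prv Ax (X.imp (W.imp Z))) (h2 : Prv Ax (Y.imp W)) :
    Prv Ax ((X.and Y).imp Z) := by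
  have t : Taut ((X.imp (W.imp Z)).imp ((Y.imp W).imp ((X.and Y).imp Z))) := by
    intro v; simp only [evalWith]
    cases evalWith v X <;> cases evalWith v Y <;> cases evalWith v W <;>
      cases evalWith v Z <;> rfl
  have lt : Linf ((X.imp (W.imp Z)).imp ((Y.imp W).imp ((X.and Y).imp Z))) :=
    Linf.imp (Linf.imp hX (Linf.imp hW hZ))
      (Linf.imp (Linf.imp hY hW) (Linf.imp (Linf.and hX hY) hZ))
  exact Prv.mp (Prv.mp (Prv.taut lt t) h1) h2

lemma conj_box {n : ℕ} {X Y P Q : Fm} (hX : Linf X) (hY : Linf Y) (hP : Linf P) (hQ : Linf Q)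
    (hPn : BoxLt P n) (hQn : BoxLt Q n)
    (h1 : Prv S4hAx (X.imp (Fm.box n P))) (h2 : Prv S4hAx (Y.imp (Fm.box n Q))) :
    Prv S4hAx ((X.and Y).imp (Fm.box n (P.and Q))) := by
  have lP : Linf (P.imp (Q.imp (P.and Q))) := Linf.imp hP (Linf.imp hQ (Linf.and hP hQ))
  have bP : BoxLt (P.imp (Q.imp (P.and Q))) n := by
    intro i hi
    rcases hi with hi | hi | hi | hi
    · exact hPn i hi
    · exact hQn i hi
    · exact hPn i hi
    · exact hQn i hi
  have tP : Taut (P.imp (Q.imp (P.and Q))) := by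
    intro v; simp only [evalWith]
    cases evalWith v P <;> cases evalWith v Q <;> rfl
  have s0 : Prv S4hAx (Fm.box n (P.imp (Q.imp (P.and Q)))) :=
    Prv.nec n (Prv.taut lP tP) bP
  have k1 : Prv S4hAx ((Fm.box n (P.imp (Q.imp (P.and Q)))).imp
      ((Fm.box n P).imp (Fm.box n (Q.imp (P.and Q))))) :=
    Prv.ax (Or.inl (Or.inr (Or.inl ⟨P, Q.imp (P.and Q), n, Linf.box n lP bP, rfl⟩)))
  have s1 : Prv S4hAx ((Fm.box n P).imp (Fm.box n (Q.imp (P.and Q)))) := Prv.mp k1 s0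
  have lQ : Linf (Q.imp (P.and Q)) := Linf.imp hQ (Linf.and hP hQ)
  have bQ : BoxLt (Q.imp (P.and Q)) n := by
    intro i hi
    rcases hi with hi | hi | hi
    · exact hQn i hi
    · exact hPn i hi
    · exact hQn i hi
  have k2 : Prv S4hAx ((Fm.box n (Q.imp (P.and Q))).imp
      ((Fm.box n Q).imp (Fm.box n (P.and Q)))) :=
    Prv.ax (Or.inl (Or.inr (Or.inl ⟨Q, P.and Q, n, Linf.box n lQ bQ, rfl⟩)))
  have lBnP : Linf (Fm.box n P) := Linf.box n hP hPn
  have lBnQ : Linf (Fm.box n Q) := Linf.box n hQ hQn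
  have lBnQPQ : Linf (Fm.box n (Q.imp (P.and Q))) := Linf.box n lQ bQ
  have lBnPQ : Linf (Fm.box n (P.and Q)) :=
    Linf.box n (Linf.and hP hQ) (fun i hi => bQ i (Or.inr hi))
  have a1 : Prv S4hAx (X.imp (Fm.box n (Q.imp (P.and Q)))) :=
    imp_trans hX lBnP lBnQPQ h1 s1
  have a2 : Prv S4hAx (X.imp ((Fm.box n Q).imp (Fm.box n (P.and Q)))) :=
    imp_trans hX lBnQPQ (Linf.imp lBnQ lBnPQ) a1 k2
  exact prv_and_mp hX hY lBnQ lBnPQ a2 h2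

lemma linf_conj : ∀ l : List Fm, (∀ B ∈ l, Linf B) → Linf (conjList l) := by
  intro l
  induction l with
  | nil => intro _; exact Linf.neg Linf.bot
  | cons x l ih =>
      intro h
      exact Linf.and (h x (List.mem_cons_self)) (ih (fun B hB => h B (List.mem_cons_of_mem x hB)))

lemma eval_conj (v : Fm → Bool) : ∀ l : List Fm,
    evalWith v (conjList l) = l.all (fun B => evalWith v B) := by
  intro l
  induction l with
  | nil => rfl
  | cons x l ih =>
      show (evalWith v x && evalWith v (conjList l)) = (evalWith v x && l.all fun B => evalWith v B)
      rw [ih]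

lemma prv_copies {D : Fm} (hD : Linf D) : ∀ l : List Fm, (∀ B ∈ l, B = D) →
    Prv S4hAx (D.imp (conjList l)) := by
  intro l hl
  have hlinf : Linf (conjList l) := linf_conj l (fun B hB => (hl B hB) ▸ hD)
  have t : Taut (D.imp (conjList l)) := by
    intro v
    show (!(evalWith v D) || evalWith v (conjList l)) = true
    cases hd : evalWith v D with
    | false => rfl
    | true =>
        rw [eval_conj]
        simp only [Bool.true_or, Bool.not_true, Bool.false_or, List.all_eq_true]
        intro B hB
        rw [hl B hB]
        exact hd
  exact Prv.taut (Linf.imp hD hlinf) t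

lemma tau_conj (n : ℕ) : ∀ l : List Fm, tau n (conjList l) = conjList (l.map (tau n)) := by
  intro l
  induction l with
  | nil => rfl
  | cons x l ih =>
      show Fm.and (tau n x) (tau n (conjList l)) = Fm.and (tau n x) (conjList (l.map (tau n)))
      rw [ih]

lemma boxLt_top (n : ℕ) : BoxLt Fm.top n := fun _ hi => False.elim hi

lemma conj_lift (n : ℕ) : ∀ L : List (ℕ × Fm), (∀ p ∈ L, Linf (Fm.box p.1 p.2)) →
    (∀ p ∈ L, p.1 ≤ n) →
    Prv S4hAx ((conjList (L.map fun p => Fm.box p.1 p.2)).imp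
      (Fm.box n (tau n (conjList (L.map fun p => Fm.box p.1 p.2))))) := by
  intro L
  induction L with
  | nil =>
      intro _ _
      have htop : Linf Fm.top := Linf.neg Linf.bot
      have tt : Taut Fm.top := fun _ => rfl
      have hb : Prv S4hAx (Fm.box n Fm.top) := Prv.nec n (Prv.taut htop tt) (boxLt_top n)
      exact prv_imp_weak htop (Linf.box n htop (boxLt_top n)) hb
  | cons p L ih =>
      intro hL hm
      have hp : Linf (Fm.box p.1 p.2) := hL p (List.mem_cons_self)
      have hC' : Linf (conjList (L.map fun q => Fm.box q.1 q.2)) := by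
        refine linf_conj _ ?_
        intro B hB
        rw [List.mem_map] at hB
        obtain ⟨q, hq, rfl⟩ := hB
        exact hL q (List.mem_cons_of_mem p hq)
      have h1 := single (hm p (List.mem_cons_self)) hp
      have h2 := ih (fun q hq => hL q (List.mem_cons_of_mem p hq))
        (fun q hq => hm q (List.mem_cons_of_mem p hq))
      exact conj_box hp hC' (linf_tau hp) (linf_tau hC')
        (boxLt_tau _) (boxLt_tau _) h1 h2

end StrongNec
/-- strong necessitation for `S4_h`. -/
theorem S4h_strong_necessitation (L : List (ℕ × Fm)) (n : ℕ) (A : Fm)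
    (hL : ∀ p ∈ L, Linf (Fm.box p.1 p.2))
    (hm : ∀ p ∈ L, p.1 ≤ n)
    (hA : Linf A) (hn : BoxLt A n)
    (h : Deriv S4hAx {conjList (L.map fun p => Fm.box p.1 p.2)} A) :
    Deriv S4hAx {conjList (L.map fun p => Fm.box p.1 p.2)} (Fm.box n A) := by
  obtain ⟨l, hl, hprv⟩ := h
  set C := conjList (L.map fun p => Fm.box p.1 p.2) with hCdef
  have hC : Linf C := by
    refine linf_conj _ ?_
    intro B hB
    rw [List.mem_map] at hB
    obtain ⟨q, hq, rfl⟩ := hB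
    exact hL q hq
  have hl' : ∀ B ∈ l, B = C := fun B hB => hl B hB
  have h1 : Prv S4hAx ((tau n (conjList l)).imp A) := by
    have h0 := prv_tau (n := n) hprv
    rwa [show tau n ((conjList l).imp A) = (tau n (conjList l)).imp (tau n A) from rfl,
      tau_fix hn] at h0
  rw [tau_conj] at h1
  have hlmap : ∀ B ∈ l.map (tau n), B = tau n C := by
    intro B hB
    rw [List.mem_map] at hB
    obtain ⟨B', hB', rfl⟩ := hB
    rw [hl' B' hB']
  have h2 : Prv S4hAx ((tau n C).imp (conjList (l.map (tau n)))) :=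
    prv_copies (linf_tau hC) _ hlmap
  have hconjlinf : Linf (conjList (l.map (tau n))) :=
    linf_conj _ (fun B hB => (hlmap B hB) ▸ linf_tau hC)
  have h3 : Prv S4hAx ((tau n C).imp A) :=
    imp_trans (linf_tau hC) hconjlinf hA h2 h1
  have bC : BoxLt ((tau n C).imp A) n := by
    intro i hi
    rcases hi with hi | hi
    · exact (occurs_tau hi).1
    · exact hn i hi
  have h4 : Prv S4hAx (Fm.box n ((tau n C).imp A)) := Prv.nec n h3 bC
  have hK : Prv S4hAx ((Fm.box n ((tau n C).imp A)).imp
      ((Fm.box n (tau n C)).imp (Fm.box n A))) :=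
    Prv.ax (Or.inl (Or.inr (Or.inl ⟨tau n C, A, n,
      Linf.box n (Linf.imp (linf_tau hC) hA) bC, rfl⟩)))
  have h5 : Prv S4hAx ((Fm.box n (tau n C)).imp (Fm.box n A)) := Prv.mp hK h4
  have h6 : Prv S4hAx (C.imp (Fm.box n (tau n C))) := conj_lift n L hL hm
  have h7 : Prv S4hAx (C.imp (Fm.box n A)) :=
    imp_trans hC (Linf.box n (linf_tau hC) (boxLt_tau _)) (Linf.box n hA hn) h6 h5
  refine ⟨[C], ?_, ?_⟩
  · intro B hB
    simp only [List.mem_singleton] at hB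
    rw [hB]
    exact rfl
  · have htop : Linf Fm.top := Linf.neg Linf.bot
    have t : Prv S4hAx ((C.and Fm.top).imp C) := by
      refine Prv.taut (Linf.imp (Linf.and hC htop) hC) ?_
      intro v
      show (!(evalWith v C && !false) || evalWith v C) = true
      cases evalWith v C <;> rfl
    exact imp_trans (Linf.and hC htop) hC (Linf.box n hA hn) t h7
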